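/- (Generalization gap of least-squares linear regression with Gaussian noise.) Fix x₁,…,xₙ ∈ ℝ^d with invertible Gram matrix x̄ = Σᵢ xᵢxᵢᵀ, fix β ∈ ℝ^d, and let Yᵢ = βᵀxᵢ + Wᵢ and Y′ᵢ = βᵀxᵢ + W′ᵢ with (Wᵢ), (W′ᵢ) all independent, mean zero, variance σ². Let θ̂ = (x xᵀ)⁻¹ x Yᵀ be the least-squares estimator. Then E[(1/n)Σᵢ(θ̂ᵀxᵢ − Y′ᵢ)²] − E[(1/n)Σᵢ(θ̂ᵀxᵢ − Yᵢ)²] = 2dσ²/n. -/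

import Mathlib

open MeasureTheory ProbabilityTheory Matrix

/-- Least-squares estimator `θ̂ = (x xᵀ)⁻¹ x yᵀ` for the feature matrix `x` and
response vector `y`. -/
noncomputable def lsEstimator {d n : ℕ} (x : Matrix (Fin d) (Fin n) ℝ)
    (y : Fin n → ℝ) : Fin d → ℝ :=
  (x * x.transpose)⁻¹ *ᵥ (x *ᵥ y)

section aux

set_option linter.unusedSectionVars false

variable {Ω : Type*} [MeasurableSpace Ω] {μ : Measure Ω} [IsProbabilityMeasure μ]
variable {ι : Type*} [Fintype ι] [DecidableEq ι]
variable {V : ι → Ω → ℝ} {σ : ℝ}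

lemma sq_sum_expand (c : ι → ℝ) :
    (fun ω => (∑ k, c k * V k ω) ^ 2)
      = fun ω => ∑ k, ∑ l, (c k * c l) * (V k ω * V l ω) := by
  funext ω
  rw [sq, Finset.sum_mul_sum]
  exact Finset.sum_congr rfl fun k _ => Finset.sum_congr rfl fun l _ => by ring

lemma aux_integrable (hint : ∀ k l, Integrable (fun ω => V k ω * V l ω) μ) (c : ι → ℝ) :
    Integrable (fun ω => (∑ k, c k * V k ω) ^ 2) μ := by
  rw [sq_sum_expand]
  exact integrable_finset_sum _ fun k _ =>
    integrable_finset_sum _ fun l _ => (hint k l).const_mul _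

lemma aux_integral
    (hmeas : ∀ k, Measurable (V k))
    (hindep : iIndepFun V μ)
    (hmean : ∀ k, ∫ ω, V k ω ∂μ = 0)
    (hvar : ∀ k, ∫ ω, (V k ω) ^ 2 ∂μ = σ ^ 2)
    (hint : ∀ k l, Integrable (fun ω => V k ω * V l ω) μ)
    (c : ι → ℝ) :
    ∫ ω, (∑ k, c k * V k ω) ^ 2 ∂μ = (∑ k, (c k) ^ 2) * σ ^ 2 := by
  have hVint : ∀ k, Integrable (V k) μ := by
    intro k
    refine ((hint k k).add (integrable_const 1)).mono (hmeas k).aestronglyMeasurable ?_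
    filter_upwards with ω
    have h : |V k ω| ≤ V k ω * V k ω + 1 := by nlinarith [sq_nonneg (|V k ω| - 1), sq_abs (V k ω)]
    calc ‖V k ω‖ = |V k ω| := rfl
      _ ≤ V k ω * V k ω + 1 := h
      _ = ‖V k ω * V k ω + 1‖ := (Real.norm_of_nonneg (by nlinarith [sq_nonneg (V k ω)])).symm
  have hcross : ∀ k l, ∫ ω, V k ω * V l ω ∂μ = if k = l then σ ^ 2 else 0 := by
    intro k l
    by_cases h : k = l
    · subst h
      rw [if_pos rfl, ← hvar k]
      simp_rw [pow_two]
    · have := IndepFun.integral_mul_eq_mul_integral (hindep.indepFun h) (hVint k).aestronglyMeasurable (hVint l).aestronglyMeasurable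
      rw [if_neg h, show (fun ω => V k ω * V l ω) = V k * V l from rfl, this,
        hmean k, hmean l, mul_zero]
  rw [sq_sum_expand]
  rw [integral_finset_sum _ (fun k _ =>
    integrable_finset_sum _ fun l _ => (hint k l).const_mul _)]
  have : ∀ k, ∫ ω, ∑ l, (c k * c l) * (V k ω * V l ω) ∂μ = c k ^ 2 * σ ^ 2 := by
    intro k
    rw [integral_finset_sum _ (fun l _ => (hint k l).const_mul _)]
    simp_rw [integral_const_mul, hcross]
    rw [Finset.sum_eq_single k (fun l _ hl => by simp [Ne.symm hl]) (by simp)]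
    simp [pow_two]
  simp_rw [this]
  rw [← Finset.sum_mul]

end aux

lemma lsEstimator_pred {d n : ℕ} (x : Matrix (Fin d) (Fin n) ℝ)
    (hx : IsUnit (x * x.transpose).det) (β : Fin d → ℝ) (W : Fin n → ℝ) :
    vecMul (lsEstimator x (fun i' => vecMul β x i' + W i')) x
      = fun i => vecMul β x i + ((x.transpose * (x * x.transpose)⁻¹ * x) *ᵥ W) i := by
  have h1 : (fun i' => vecMul β x i' + W i') = x.transpose *ᵥ β + W := by
    funext i'; rw [Pi.add_apply, mulVec_transpose]
  have h2 : lsEstimator x (fun i' => vecMul β x i' + W i')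
      = β + ((x * x.transpose)⁻¹ * x) *ᵥ W := by
    unfold lsEstimator
    rw [h1, mulVec_add, mulVec_mulVec, mulVec_add, mulVec_mulVec, mulVec_mulVec,
      nonsing_inv_mul _ hx, one_mulVec]
  have h3 : ((((x * x.transpose)⁻¹ * x) *ᵥ W) ᵥ* x)
      = (x.transpose * (x * x.transpose)⁻¹ * x) *ᵥ W := by
    rw [← mulVec_transpose, mulVec_mulVec, Matrix.mul_assoc]
  funext i
  rw [h2, add_vecMul, h3]
  rfl

lemma trace_hat {d n : ℕ} (x : Matrix (Fin d) (Fin n) ℝ)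
    (hx : IsUnit (x * x.transpose).det) :
    ∑ i, (x.transpose * (x * x.transpose)⁻¹ * x) i i = (d : ℝ) := by
  have : ∑ i, (x.transpose * (x * x.transpose)⁻¹ * x) i i
      = trace (x.transpose * (x * x.transpose)⁻¹ * x) := rfl
  rw [this, trace_mul_comm, ← Matrix.mul_assoc x x.transpose, mul_nonsing_inv _ hx]
  simp [trace_one]

theorem linear_regression_generalization_gap
    {Ω : Type*} [MeasurableSpace Ω] (μ : Measure Ω) [IsProbabilityMeasure μ]
    (d n : ℕ) (hn : 0 < n)
    (x : Matrix (Fin d) (Fin n) ℝ) (hx : IsUnit (x * x.transpose).det)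
    (β : Fin d → ℝ) (σ : ℝ) (hσ : 0 < σ)
    (V : (Fin n ⊕ Fin n) → Ω → ℝ)
    (hmeas : ∀ k, Measurable (V k))
    (hindep : iIndepFun V μ)
    (hmean : ∀ k, ∫ ω, V k ω ∂μ = 0)
    (hvar : ∀ k, ∫ ω, (V k ω) ^ 2 ∂μ = σ ^ 2)
    (hint : ∀ k l, Integrable (fun ω => V k ω * V l ω) μ) :
    (∫ ω, (1 / (n : ℝ)) * ∑ i : Fin n,
        (vecMul (lsEstimator x (fun i' => vecMul β x i' + V (Sum.inl i') ω)) x i -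
          (vecMul β x i + V (Sum.inr i) ω)) ^ 2 ∂μ) -
      (∫ ω, (1 / (n : ℝ)) * ∑ i : Fin n,
        (vecMul (lsEstimator x (fun i' => vecMul β x i' + V (Sum.inl i') ω)) x i -
          (vecMul β x i + V (Sum.inl i) ω)) ^ 2 ∂μ) =
      2 * (d : ℝ) * σ ^ 2 / (n : ℝ) := by
  classical
  set H : Matrix (Fin n) (Fin n) ℝ := x.transpose * (x * x.transpose)⁻¹ * x with hH
  set a : Fin n → (Fin n ⊕ Fin n) → ℝ :=
    fun i => Sum.elim (fun j => H i j) (fun j => if j = i then -1 else 0) with ha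
  set b : Fin n → (Fin n ⊕ Fin n) → ℝ :=
    fun i => Sum.elim (fun j => H i j - if j = i then 1 else 0) (fun _ => 0) with hb
  have hpred : ∀ (W : Fin n → ℝ) (i : Fin n),
      vecMul (lsEstimator x (fun i' => vecMul β x i' + W i')) x i
        = vecMul β x i + ∑ j, H i j * W j := by
    intro W i
    rw [lsEstimator_pred x hx β W]
    simp [mulVec, dotProduct, hH]
  have htest : ∀ ω (i : Fin n),
      vecMul (lsEstimator x (fun i' => vecMul β x i' + V (Sum.inl i') ω)) x i -
        (vecMul β x i + V (Sum.inr i) ω) = ∑ k, a i k * V k ω := by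
    intro ω i
    rw [hpred (fun j => V (Sum.inl j) ω) i, Fintype.sum_sum_type]
    simp only [ha, Sum.elim_inl, Sum.elim_inr, ite_mul, neg_mul, one_mul, zero_mul]
    rw [Finset.sum_ite_eq' Finset.univ i (fun j => -V (Sum.inr j) ω)]
    simp only [Finset.mem_univ, if_pos]
    ring
  have htrain : ∀ ω (i : Fin n),
      vecMul (lsEstimator x (fun i' => vecMul β x i' + V (Sum.inl i') ω)) x i -
        (vecMul β x i + V (Sum.inl i) ω) = ∑ k, b i k * V k ω := by
    intro ω i
    rw [hpred (fun j => V (Sum.inl j) ω) i, Fintype.sum_sum_type]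
    simp only [hb, Sum.elim_inl, Sum.elim_inr, sub_mul, ite_mul, one_mul, zero_mul,
      Finset.sum_sub_distrib, Finset.sum_const_zero]
    rw [Finset.sum_ite_eq' Finset.univ i (fun j => V (Sum.inl j) ω)]
    simp only [Finset.mem_univ, if_pos]
    ring
  have key : ∀ (c : (Fin n ⊕ Fin n) → ℝ),
      ∫ ω, (∑ k, c k * V k ω) ^ 2 ∂μ = (∑ k, (c k) ^ 2) * σ ^ 2 :=
    fun c => aux_integral hmeas hindep hmean hvar hint c
  have e1 : (∫ ω, (1 / (n : ℝ)) * ∑ i : Fin n,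
      (vecMul (lsEstimator x (fun i' => vecMul β x i' + V (Sum.inl i') ω)) x i -
        (vecMul β x i + V (Sum.inr i) ω)) ^ 2 ∂μ)
      = (1 / (n : ℝ)) * ∑ i : Fin n, (∑ k, (a i k) ^ 2) * σ ^ 2 := by
    have heq : (fun ω => (1 / (n : ℝ)) * ∑ i : Fin n,
        (vecMul (lsEstimator x (fun i' => vecMul β x i' + V (Sum.inl i') ω)) x i -
          (vecMul β x i + V (Sum.inr i) ω)) ^ 2)
        = fun ω => (1 / (n : ℝ)) * ∑ i : Fin n, (∑ k, a i k * V k ω) ^ 2 := by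
      funext ω
      congr 1
      exact Finset.sum_congr rfl fun i _ => by rw [htest ω i]
    rw [heq, integral_const_mul,
      integral_finset_sum _ (fun i _ => aux_integrable hint (a i))]
    congr 1
    exact Finset.sum_congr rfl fun i _ => key (a i)
  have e2 : (∫ ω, (1 / (n : ℝ)) * ∑ i : Fin n,
      (vecMul (lsEstimator x (fun i' => vecMul β x i' + V (Sum.inl i') ω)) x i -
        (vecMul β x i + V (Sum.inl i) ω)) ^ 2 ∂μ)
      = (1 / (n : ℝ)) * ∑ i : Fin n, (∑ k, (b i k) ^ 2) * σ ^ 2 := by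
    have heq : (fun ω => (1 / (n : ℝ)) * ∑ i : Fin n,
        (vecMul (lsEstimator x (fun i' => vecMul β x i' + V (Sum.inl i') ω)) x i -
          (vecMul β x i + V (Sum.inl i) ω)) ^ 2)
        = fun ω => (1 / (n : ℝ)) * ∑ i : Fin n, (∑ k, b i k * V k ω) ^ 2 := by
      funext ω
      congr 1
      exact Finset.sum_congr rfl fun i _ => by rw [htrain ω i]
    rw [heq, integral_const_mul,
      integral_finset_sum _ (fun i _ => aux_integrable hint (b i))]
    congr 1
    exact Finset.sum_congr rfl fun i _ => key (b i)
  have hSa : ∀ i : Fin n, ∑ k, (a i k) ^ 2 = (∑ j, (H i j) ^ 2) + 1 := by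
    intro i
    rw [Fintype.sum_sum_type]
    simp only [ha, Sum.elim_inl, Sum.elim_inr]
    congr 1
    have : ∀ j : Fin n, ((if j = i then (-1 : ℝ) else 0)) ^ 2 = if j = i then 1 else 0 :=
      fun j => by split <;> norm_num
    simp_rw [this]
    rw [Finset.sum_ite_eq' Finset.univ i (fun _ => (1 : ℝ))]
    simp
  have hSb : ∀ i : Fin n, ∑ k, (b i k) ^ 2 = (∑ j, (H i j) ^ 2) - 2 * H i i + 1 := by
    intro i
    rw [Fintype.sum_sum_type]
    simp only [hb, Sum.elim_inl, Sum.elim_inr]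
    have : ∀ j : Fin n, (H i j - if j = i then (1 : ℝ) else 0) ^ 2
        = (H i j) ^ 2 - (if j = i then 2 * H i j else 0) + (if j = i then 1 else 0) :=
      fun j => by split <;> simp_all <;> ring
    simp_rw [this]
    rw [Finset.sum_add_distrib, Finset.sum_sub_distrib,
      Finset.sum_ite_eq' Finset.univ i (fun j => 2 * H i j),
      Finset.sum_ite_eq' Finset.univ i (fun _ => (1 : ℝ))]
    simp
  rw [e1, e2, ← mul_sub, ← Finset.sum_sub_distrib]
  have hstep : ∀ i ∈ Finset.univ, (∑ k, (a i k) ^ 2) * σ ^ 2 - (∑ k, (b i k) ^ 2) * σ ^ 2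
      = H i i * (2 * σ ^ 2) := fun i _ => by rw [hSa i, hSb i]; ring
  rw [Finset.sum_congr rfl hstep, ← Finset.sum_mul, hH, trace_hat x hx]
  have hn' : (n : ℝ) ≠ 0 := Nat.cast_ne_zero.mpr hn.ne'
  field_simp
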